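/- arXiv:2601.06370 — 6 statements merged into one kernel-verified Lean document; each statement's English description precedes it below -/
import Mathlib

section
/- For n ≥ 2, the matrix -C_n^- admits the product decomposition -C_n^- = diag(X^{⊗(n-1)}, I) · (I_2 ⊗ C_{n-1}(Z)) · antidiag(I, X^{⊗(n-1)}), where C_{n-1}(Z) = diag(1, ..., 1, -1) is the 2^{n-1} × 2^{n-1} multicontrolled-Z matrix, diag(A, B) denotes the block-diagonal matrix, and antidiag(A, B) denotes the block matrix [[0, A],[B, 0]]. -/
open Matrix

/-- The signed exchange matrix `C_n^-`: `+1` at the two anti-diagonal corners,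
`-1` at the interior anti-diagonal entries, `0` elsewhere. -/
def Cnm (n : ℕ) : Matrix (Fin (2^n)) (Fin (2^n)) ℝ :=
  Matrix.of fun i j =>
    if ((i : ℕ) = 0 ∧ (j : ℕ) = 2^n - 1) ∨ ((i : ℕ) = 2^n - 1 ∧ (j : ℕ) = 0) then 1
    else if (i : ℕ) + (j : ℕ) = 2^n - 1 then -1 else 0

/-- The exchange matrix of size `m` (ones on the anti-diagonal). -/
def Xm (m : ℕ) : Matrix (Fin m) (Fin m) ℝ :=
  Matrix.of fun i j => if (i : ℕ) + (j : ℕ) = m - 1 then 1 else 0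

/-- The multicontrolled-Z matrix of size `m`: `diag(1, ..., 1, -1)`. -/
def CZ (m : ℕ) : Matrix (Fin m) (Fin m) ℝ :=
  Matrix.of fun i j => if i = j then (if (i : ℕ) = m - 1 then -1 else 1) else 0

lemma Xm_mul_CZ (m : ℕ) : Xm m * CZ m =
    Matrix.of (fun (i j : Fin m) => if (i:ℕ)+(j:ℕ)=m-1 then (if (j:ℕ)=m-1 then (-1:ℝ) else 1) else 0) := by
  ext i j
  simp [Matrix.mul_apply, Xm, CZ, mul_ite, ite_mul, Finset.sum_ite_eq']
  split_ifs <;> norm_num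

lemma CZ_mul_Xm (m : ℕ) : CZ m * Xm m =
    Matrix.of (fun (i j : Fin m) => if (i:ℕ)+(j:ℕ)=m-1 then (if (i:ℕ)=m-1 then (-1:ℝ) else 1) else 0) := by
  ext i j
  rw [Matrix.mul_apply, Finset.sum_eq_single i (fun b _ hb => by simp [CZ, Xm, hb.symm])
    (by simp)]
  simp only [CZ, Xm, Matrix.of_apply, if_pos rfl]
  split_ifs <;> norm_num

theorem stmt_6 (n : ℕ) (hn : 1 ≤ n) (h : 2^n + 2^n = 2^(n+1)) :
    -(Cnm (n+1)) =
      Matrix.reindex (finSumFinEquiv.trans (finCongr h)) (finSumFinEquiv.trans (finCongr h))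
        (Matrix.fromBlocks (Xm (2^n)) 0 0 1 *
          Matrix.fromBlocks (CZ (2^n)) 0 0 (CZ (2^n)) *
          Matrix.fromBlocks 0 1 (Xm (2^n)) 0) := by
  rw [eq_comm, Equiv.apply_eq_iff_eq_symm_apply, Matrix.reindex_symm, Matrix.reindex_apply]
  simp only [Matrix.fromBlocks_multiply, Matrix.mul_zero, Matrix.zero_mul, Matrix.mul_one,
    Matrix.one_mul, add_zero, zero_add, Xm_mul_CZ, CZ_mul_Xm]
  have hm : 1 ≤ 2^n := Nat.one_le_two_pow
  have hmn : 2 ≤ 2^n := by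
    calc 2 = 2^1 := rfl
    _ ≤ 2^n := Nat.pow_le_pow_right (by norm_num) hn
  ext i j
  rcases i with i | i <;> rcases j with j | j <;>
    · have hi := i.isLt
      have hj := j.isLt
      simp only [Matrix.fromBlocks_apply₁₁, Matrix.fromBlocks_apply₁₂,
        Matrix.fromBlocks_apply₂₁, Matrix.fromBlocks_apply₂₂, Matrix.submatrix_apply,
        Equiv.symm_symm, Equiv.trans_apply, finSumFinEquiv_apply_left, finSumFinEquiv_apply_right,
        finCongr_apply, Fin.coe_cast, Fin.coe_castAdd, Fin.coe_natAdd, Matrix.neg_apply,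
        Matrix.of_apply, Matrix.zero_apply, Cnm]
      split_ifs
      all_goals try (exfalso; omega)
      all_goals norm_num
end

section
/- The Dirichlet Laplacian A_{n,1} admits the five-term linear combination of unitaries A_{n,1} = -2·I^{⊗n} + S_n + S_n^† - (1/2)·X^{⊗n} - (1/2)·C_n^-, where each of the five matrices I^{⊗n}, S_n, S_n^†, X^{⊗n}, C_n^- is unitary. -/
open Matrix

/-- The discrete Dirichlet Laplacian: tridiagonal with `-2` on the diagonal and
`1` on the sub- and super-diagonals. -/
def A1 (n : ℕ) : Matrix (Fin (2^n)) (Fin (2^n)) ℝ :=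
  Matrix.of fun i j =>
    if (i : ℕ) = (j : ℕ) then -2
    else if (i : ℕ) + 1 = (j : ℕ) ∨ (j : ℕ) + 1 = (i : ℕ) then 1 else 0

/-- The cyclic increment matrix: `(S_n)_{i,j} = 1` iff `i ≡ j + 1 (mod 2^n)`. -/
def Sn (n : ℕ) : Matrix (Fin (2^n)) (Fin (2^n)) ℝ :=
  Matrix.of fun i j => if (i : ℕ) = ((j : ℕ) + 1) % 2^n then 1 else 0

/-- `X^{⊗n}`: the exchange matrix of size `2^n` (ones on the anti-diagonal). -/
def Xpow (n : ℕ) : Matrix (Fin (2^n)) (Fin (2^n)) ℝ :=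
  Matrix.of fun i j => if (i : ℕ) + (j : ℕ) = 2^n - 1 then 1 else 0

private lemma two_le_pow {n : ℕ} (hn : 1 ≤ n) : 2 ≤ 2^n := by
  have : 2^1 ≤ 2^n := Nat.pow_le_pow_right (by norm_num) hn
  simpa using this

private lemma Sn_eq (n : ℕ) (hn : 1 ≤ n) [NeZero (2^n)] :
    Sn n = Matrix.of fun i j : Fin (2^n) => if i = j + 1 then (1:ℝ) else 0 := by
  have h2 := two_le_pow hn
  have key : ∀ j : Fin (2^n), ((j + 1 : Fin (2^n)) : ℕ) = ((j : ℕ) + 1) % 2^n := by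
    intro j
    have h1 : (1:ℕ) % 2^n = 1 := Nat.mod_eq_of_lt (by omega)
    rw [Fin.val_add, Fin.val_one', h1]
  have hcond : ∀ i j : Fin (2^n), ((i:ℕ) = ((j:ℕ)+1) % 2^n) ↔ (i = j + 1) := by
    intro i j; rw [Fin.ext_iff, key]
  ext i j
  simp only [Sn, of_apply]
  rw [if_congr (hcond i j) rfl rfl]

private lemma Sn_mul_SnT (n : ℕ) (hn : 1 ≤ n) : Sn n * (Sn n)ᵀ = 1 := by
  haveI : NeZero (2^n) := ⟨(Nat.two_pow_pos n).ne'⟩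
  rw [Sn_eq n hn]
  ext i k
  rw [mul_apply]
  have hc : ∀ j : Fin (2^n), (i = j + 1) ↔ (j = i - 1) := by
    intro j
    constructor <;> rintro rfl
    · rw [add_sub_cancel_right]
    · rw [sub_add_cancel]
  simp only [transpose_apply, of_apply, ite_mul, one_mul, zero_mul, hc]
  rw [Finset.sum_ite_eq' Finset.univ (i-1) (fun j => if k = j + 1 then (1:ℝ) else 0)]
  simp [sub_add_cancel, Matrix.one_apply, eq_comm]

private lemma Xpow_eq (n : ℕ) :
    Xpow n = Matrix.of fun i j : Fin (2^n) => if j = Fin.rev i then (1:ℝ) else 0 := by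
  ext i j
  have hcond : ((i:ℕ) + (j:ℕ) = 2^n - 1) ↔ (j = Fin.rev i) := by
    rw [Fin.ext_iff, Fin.val_rev]
    have := i.isLt; have := j.isLt
    omega
  simp only [Xpow, of_apply]
  rw [if_congr hcond rfl rfl]

private lemma Xpow_mul_XpowT (n : ℕ) : Xpow n * (Xpow n)ᵀ = 1 := by
  rw [Xpow_eq n]
  ext i k
  rw [mul_apply]
  simp only [transpose_apply, of_apply, ite_mul, one_mul, zero_mul]
  rw [Finset.sum_ite_eq' Finset.univ (Fin.rev i) (fun j => if j = Fin.rev k then (1:ℝ) else 0)]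
  simp [Matrix.one_apply, Fin.rev_inj, eq_comm]

private lemma Cnm_eq (n : ℕ) :
    Cnm n = Matrix.of fun i j : Fin (2^n) =>
      if j = Fin.rev i then (if (j:ℕ) = 0 ∨ (j:ℕ) = 2^n - 1 then (1:ℝ) else -1) else 0 := by
  ext i j
  have hrev : (j = Fin.rev i) ↔ (i:ℕ) + (j:ℕ) = 2^n - 1 := by
    rw [Fin.ext_iff, Fin.val_rev]
    have := i.isLt; have := j.isLt
    omega
  have hi := i.isLt; have hj := j.isLt
  simp only [Cnm, of_apply, hrev]
  split_ifs <;> first | rfl | (exfalso; omega)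

private lemma Cnm_mul_CnmT (n : ℕ) : Cnm n * (Cnm n)ᵀ = 1 := by
  rw [Cnm_eq n]
  ext i k
  rw [mul_apply]
  rw [Finset.sum_eq_single (Fin.rev i) (fun j _ hj => by
      simp only [transpose_apply, of_apply, if_neg hj, zero_mul])
    (fun h => absurd (Finset.mem_univ _) h)]
  simp only [transpose_apply, of_apply, if_pos rfl]
  by_cases h : i = k
  · subst h
    rw [if_pos rfl, Matrix.one_apply_eq]
    split_ifs <;> norm_num
  · have hrev : Fin.rev i ≠ Fin.rev k := fun hc => h (Fin.rev_inj.mp hc)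
    rw [if_neg hrev, mul_zero, Matrix.one_apply_ne h]

theorem stmt_7 (n : ℕ) (hn : 1 ≤ n) :
    A1 n = (-2 : ℝ) • (1 : Matrix (Fin (2^n)) (Fin (2^n)) ℝ) + Sn n + (Sn n)ᵀ
        - (1/2 : ℝ) • Xpow n - (1/2 : ℝ) • Cnm n ∧
    ((1 : Matrix (Fin (2^n)) (Fin (2^n)) ℝ) * (1 : Matrix (Fin (2^n)) (Fin (2^n)) ℝ)ᵀ = 1) ∧
    (Sn n * (Sn n)ᵀ = 1) ∧ ((Sn n)ᵀ * ((Sn n)ᵀ)ᵀ = 1) ∧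
    (Xpow n * (Xpow n)ᵀ = 1) ∧ (Cnm n * (Cnm n)ᵀ = 1) := by
  refine ⟨?_, by simp, Sn_mul_SnT n hn, ?_, Xpow_mul_XpowT n, Cnm_mul_CnmT n⟩
  · have h2 := two_le_pow hn
    obtain ⟨m, hm⟩ : ∃ m, 2^n = 2 * m := ⟨2^(n-1), by rw [← pow_succ']; congr 1; omega⟩
    ext i j
    have hi := i.isLt; have hj := j.isLt
    have hj1 : ((j:ℕ)+1) % 2^n = if (j:ℕ)+1 = 2^n then 0 else (j:ℕ)+1 := by
      split_ifs with h
      · rw [h, Nat.mod_self]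
      · exact Nat.mod_eq_of_lt (by omega)
    have hi1 : ((i:ℕ)+1) % 2^n = if (i:ℕ)+1 = 2^n then 0 else (i:ℕ)+1 := by
      split_ifs with h
      · rw [h, Nat.mod_self]
      · exact Nat.mod_eq_of_lt (by omega)
    simp only [A1, Sn, Xpow, Cnm, of_apply, Matrix.add_apply, Matrix.sub_apply, Matrix.smul_apply,
      one_apply, transpose_apply, smul_eq_mul, Fin.ext_iff, hj1, hi1]
    split_ifs <;> first | (exfalso; omega) | norm_num
  · rw [transpose_transpose]
    exact mul_eq_one_comm.mp (Sn_mul_SnT n hn)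
end

section
/- Let E_n = A_{n,3} - A_{n,1} be the 2^n × 2^n matrix with entries (E_n)_{0,0} = 2a_0h, (E_n)_{0,1} = 1, (E_n)_{2^n-1, 2^n-2} = 1, (E_n)_{2^n-1, 2^n-1} = -2a_1h, and zeros elsewhere. Then E_n = 2a_0h·τ_0^{⊗n} - 2a_1h·τ_3^{⊗n} + X^{⊗n}·C_n·(I^{⊗(n-1)} ⊗ X), where τ_0 = diag(1,0), τ_3 = diag(0,1), C_n is the matrix with ones at positions (0, 2^n-1) and (2^n-1, 0) only, and X^{⊗n} is the exchange matrix. -/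
open Matrix

/-- The Neumann/Robin matrix: first row `(-2+2a₀h, 2, 0, ...)`, last row
`(..., 0, 2, -2-2a₁h)`, interior rows identical to the Dirichlet Laplacian. -/
def A3 (n : ℕ) (a0 a1 h : ℝ) : Matrix (Fin (2^n)) (Fin (2^n)) ℝ :=
  Matrix.of fun i j =>
    if (i : ℕ) = 0 ∧ (j : ℕ) = 0 then -2 + 2*a0*h
    else if (i : ℕ) = 0 ∧ (j : ℕ) = 1 then 2
    else if (i : ℕ) = 2^n - 1 ∧ (j : ℕ) = 2^n - 2 then 2
    else if (i : ℕ) = 2^n - 1 ∧ (j : ℕ) = 2^n - 1 then -2 - 2*a1*h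
    else if (i : ℕ) = (j : ℕ) then -2
    else if (i : ℕ) + 1 = (j : ℕ) ∨ (j : ℕ) + 1 = (i : ℕ) then 1 else 0

/-- `τ₀^{⊗n}`: the matrix with a single `1` in entry `(0,0)`. -/
def Tau0 (n : ℕ) : Matrix (Fin (2^n)) (Fin (2^n)) ℝ :=
  Matrix.of fun i j => if (i : ℕ) = 0 ∧ (j : ℕ) = 0 then 1 else 0

/-- `τ₃^{⊗n}`: the matrix with a single `1` in entry `(2^n-1, 2^n-1)`. -/
def Tau3 (n : ℕ) : Matrix (Fin (2^n)) (Fin (2^n)) ℝ :=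
  Matrix.of fun i j => if (i : ℕ) = 2^n - 1 ∧ (j : ℕ) = 2^n - 1 then 1 else 0

/-- The corner matrix `C_n` with ones at `(0, 2^n-1)` and `(2^n-1, 0)` only. -/
def Cn (n : ℕ) : Matrix (Fin (2^n)) (Fin (2^n)) ℝ :=
  Matrix.of fun i j =>
    if ((i : ℕ) = 0 ∧ (j : ℕ) = 2^n - 1) ∨ ((i : ℕ) = 2^n - 1 ∧ (j : ℕ) = 0) then 1 else 0

/-- `I^{⊗(n-1)} ⊗ X`: the permutation matrix flipping the last bit. -/
def IX (n : ℕ) : Matrix (Fin (2^n)) (Fin (2^n)) ℝ :=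
  Matrix.of fun i j => if (i : ℕ) / 2 = (j : ℕ) / 2 ∧ (i : ℕ) ≠ (j : ℕ) then 1 else 0

lemma pow_facts (n : ℕ) (hn : 2 ≤ n) : 4 ≤ 2^n ∧ 2^n % 2 = 0 := by
  constructor
  · calc (4:ℕ) = 2^2 := rfl
      _ ≤ 2^n := Nat.pow_le_pow_right (by norm_num) hn
  · have : 2^n = 2 * 2^(n-1) := by
      rw [← pow_succ']; congr 1; omega
    omega

lemma XC (n : ℕ) (hn : 2 ≤ n) :
    Xpow n * Cn n = Matrix.of fun i j : Fin (2^n) =>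
      if ((i:ℕ)=0 ∧ (j:ℕ)=0) ∨ ((i:ℕ)=2^n-1 ∧ (j:ℕ)=2^n-1) then 1 else 0 := by
  obtain ⟨h4, h2⟩ := pow_facts n hn
  ext i j
  have hi := i.isLt; have hj := j.isLt
  rw [Matrix.mul_apply, Matrix.of_apply]
  rw [Finset.sum_eq_single (⟨2^n - 1 - i, by omega⟩ : Fin (2^n))]
  · simp only [Xpow, Cn, Matrix.of_apply, Fin.val_mk]
    split_ifs <;> first | (exfalso; omega) | norm_num
  · intro b _ hb
    simp only [Xpow, Matrix.of_apply]
    rw [if_neg, zero_mul]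
    intro hcon
    exact hb (Fin.ext (by simp; omega))
  · intro hmem; exact absurd (Finset.mem_univ _) hmem

lemma XCIX (n : ℕ) (hn : 2 ≤ n) :
    Xpow n * Cn n * IX n = Matrix.of fun i j : Fin (2^n) =>
      if ((i:ℕ)=0 ∧ (j:ℕ)=1) ∨ ((i:ℕ)=2^n-1 ∧ (j:ℕ)=2^n-2) then 1 else 0 := by
  obtain ⟨h4, h2⟩ := pow_facts n hn
  rw [XC n hn]
  ext i j
  have hi := i.isLt; have hj := j.isLt
  rw [Matrix.mul_apply, Matrix.of_apply]
  rw [Finset.sum_eq_single i]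
  · simp only [IX, Matrix.of_apply]
    split_ifs <;> first | (exfalso; omega) | norm_num
  · intro b _ hb
    simp only [Matrix.of_apply]
    rw [if_neg, zero_mul]
    intro hcon
    exact hb (Fin.ext (by omega))
  · intro hmem; exact absurd (Finset.mem_univ _) hmem

theorem stmt_8 (n : ℕ) (hn : 2 ≤ n) (a0 a1 h : ℝ) :
    A3 n a0 a1 h - A1 n =
      (2*a0*h) • Tau0 n - (2*a1*h) • Tau3 n + Xpow n * Cn n * IX n := by
  obtain ⟨h4, h2⟩ := pow_facts n hn
  rw [XCIX n hn]
  ext i j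
  have hi := i.isLt; have hj := j.isLt
  simp only [Matrix.sub_apply, Matrix.add_apply, Matrix.smul_apply, Matrix.of_apply,
    A3, A1, Tau0, Tau3, smul_eq_mul]
  split_ifs <;> first | (exfalso; omega) | ring1
end

section
/- The rank-one projection τ_0^{⊗n} = |0⟩⟨0|^{⊗n} (the 2^n × 2^n matrix with a single 1 in entry (0,0)) admits the four-term unitary decomposition τ_0^{⊗n} = (1/4)·[ I^{⊗n} + I^{⊗(n-1)} ⊗ Z + X^{⊗n}·C_n^- + X^{⊗n}·C_n^-·(I^{⊗(n-1)} ⊗ Z) ]. -/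
open Matrix

/-- `I^{⊗(n-1)} ⊗ Z`: the diagonal matrix whose j-th diagonal entry is `1` if
`j` is even and `-1` if `j` is odd. -/
def IZ (n : ℕ) : Matrix (Fin (2^n)) (Fin (2^n)) ℝ :=
  Matrix.of fun i j => if i = j then (if (i : ℕ) % 2 = 0 then 1 else -1) else 0

theorem stmt_9 (n : ℕ) (hn : 1 ≤ n) :
    Tau0 n = (1/4 : ℝ) •
      ((1 : Matrix (Fin (2^n)) (Fin (2^n)) ℝ) + IZ n + Xpow n * Cnm n
        + Xpow n * Cnm n * IZ n) := by

  have hN : 2 ≤ 2^n := by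
    calc 2 = 2^1 := rfl
    _ ≤ 2^n := Nat.pow_le_pow_right (by norm_num) hn
  have h2 : 2^n % 2 = 0 := by
    cases n with
    | zero => omega
    | succ m => simp [pow_succ]
  ext i j
  have hi := i.isLt
  have hj := j.isLt
  have hXC : (Xpow n * Cnm n) i j =
      (if (j : ℕ) = (i : ℕ) then (if (i:ℕ) = 0 ∨ (i:ℕ) = 2^n - 1 then 1 else -1) else 0) := by
    rw [Matrix.mul_apply]
    rw [Finset.sum_eq_single (⟨2^n - 1 - (i:ℕ), by omega⟩ : Fin (2^n))]
    · simp only [Xpow, Cnm, Matrix.of_apply, Fin.val_mk]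
      rw [if_pos (by omega), one_mul]
      split_ifs <;> first | rfl | (exfalso; omega)
    · intro b _ hb
      simp only [Xpow, Matrix.of_apply]
      rw [if_neg, zero_mul]
      intro h
      exact hb (by ext; simp; omega)
    · intro h; exact absurd (Finset.mem_univ _) h
  have hXCZ : (Xpow n * Cnm n * IZ n) i j =
      (Xpow n * Cnm n) i j * (if (j:ℕ) % 2 = 0 then 1 else -1) := by
    rw [Matrix.mul_apply]
    rw [Finset.sum_eq_single j]
    · simp [IZ]
    · intro b _ hb; simp [IZ, hb]
    · simp
  rw [Matrix.smul_apply, Matrix.add_apply, Matrix.add_apply, Matrix.add_apply, hXCZ, hXC]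
  simp only [Matrix.one_apply, IZ, Tau0, Matrix.of_apply, smul_eq_mul, Fin.ext_iff]
  split_ifs <;> first | (exfalso; omega) | norm_num
end

section
/- The rank-one projection τ_3^{⊗n} (the 2^n × 2^n matrix with a single 1 in entry (2^n-1, 2^n-1)) equals (1/4)·[ I^{⊗n} + X^{⊗n}·C_n^- - X^{⊗n}·C_n^-·(I^{⊗(n-1)} ⊗ Z) - I^{⊗(n-1)} ⊗ Z ]. -/
open Matrix

theorem stmt_10 (n : ℕ) (hn : 1 ≤ n) :
    Tau3 n = (1/4 : ℝ) •
      ((1 : Matrix (Fin (2^n)) (Fin (2^n)) ℝ) + Xpow n * Cnm n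
        - Xpow n * Cnm n * IZ n - IZ n) := by
  have hN : 2 ≤ 2^n := by
    calc 2 = 2^1 := rfl
    _ ≤ 2^n := Nat.pow_le_pow_right (by norm_num) hn
  have hpar : 2^n % 2 = 0 := by
    obtain ⟨m, rfl⟩ : ∃ m, n = m + 1 := ⟨n-1, by omega⟩
    simp [pow_succ, Nat.mul_mod]
  ext i j
  have hi := i.isLt
  have hj := j.isLt
  have hXC : (Xpow n * Cnm n) i j = Cnm n ⟨2^n - 1 - (i : ℕ), by omega⟩ j := by
    rw [Matrix.mul_apply]
    rw [Finset.sum_eq_single (⟨2^n - 1 - (i : ℕ), by omega⟩ : Fin (2^n))]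
    · have : (i : ℕ) + (2^n - 1 - (i : ℕ)) = 2^n - 1 := by omega
      simp [Xpow, this]
    · intro k _ hk
      have : (i : ℕ) + (k : ℕ) ≠ 2^n - 1 := by
        intro h; apply hk; ext; simp; omega
      simp [Xpow, this]
    · simp
  have hIZ : ∀ (M : Matrix (Fin (2^n)) (Fin (2^n)) ℝ),
      (M * IZ n) i j = M i j * (if (j : ℕ) % 2 = 0 then 1 else -1) := by
    intro M
    rw [Matrix.mul_apply, Finset.sum_eq_single j]
    · simp [IZ]
    · intro k _ hk
      have : ¬ (k = j) := hk
      simp [IZ, this]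
    · simp
  simp only [Matrix.smul_apply, Matrix.add_apply, Matrix.sub_apply, Matrix.one_apply,
    hIZ, hXC, smul_eq_mul]
  simp only [Tau3, Cnm, IZ, Matrix.of_apply, Fin.ext_iff]
  split_ifs <;> (try norm_num) <;> omega
end

section
/- The 2^n × 2^n antisymmetric central-difference matrix D (with (D)_{i,i+1} = 1, (D)_{i+1,i} = -1, and zeros elsewhere) satisfies 2h·D = S_n^† - S_n + (I^{⊗(n-1)} ⊗ Z)·C_n, i.e., the tridiagonal matrix with 1 on the superdiagonal and -1 on the subdiagonal equals S_n^† - S_n + (I^{⊗(n-1)} ⊗ Z)·C_n, where C_n is the matrix with ones at positions (0, 2^n-1) and (2^n-1, 0) only. -/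
open Matrix

/-- The antisymmetric central-difference matrix: `1` on the superdiagonal,
`-1` on the subdiagonal, zeros elsewhere. -/
def Dmat (n : ℕ) : Matrix (Fin (2^n)) (Fin (2^n)) ℝ :=
  Matrix.of fun i j =>
    if (i : ℕ) + 1 = (j : ℕ) then 1
    else if (j : ℕ) + 1 = (i : ℕ) then -1 else 0

theorem stmt_14 (n : ℕ) (hn : 2 ≤ n) :
    Dmat n = (Sn n)ᵀ - Sn n + IZ n * Cn n := by
  have hN : 4 ≤ 2^n := by
    calc (4:ℕ) = 2^2 := rfl
    _ ≤ 2^n := Nat.pow_le_pow_right (by norm_num) hn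
  have hNe : 2 ∣ 2^n := dvd_pow_self 2 (by omega)
  ext i j
  have hmul : (IZ n * Cn n) i j = IZ n i i * Cn n i j := by
    rw [Matrix.mul_apply]
    apply Finset.sum_eq_single i
    · intro b _ hb
      simp [IZ, Ne.symm hb]
    · simp
  simp only [Matrix.add_apply, Matrix.sub_apply, Matrix.transpose_apply, hmul]
  simp only [Dmat, Sn, IZ, Cn, Matrix.of_apply, if_true]
  obtain ⟨a, ha⟩ := i
  obtain ⟨b, hb⟩ := j
  simp only [Fin.val_mk, if_true]
  clear hmul
  obtain ⟨d, hd⟩ := hNe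
  generalize hg : 2^n = N at ha hb hN hd ⊢
  have hmod : ∀ k : ℕ, k < N → (k+1) % N = if k+1 = N then 0 else k+1 := by
    intro k hk
    split_ifs with h
    · simp [h]
    · exact Nat.mod_eq_of_lt (by omega)
  rw [hmod _ ha, hmod _ hb]
  split_ifs <;> first | omega | norm_num
end
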